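/- (Main theorem) Let k be a commutative ring, R a k-algebra, and A a cocomplete k-linear abelian category. The functor Ψ : A_R → B_k(Mod R, A) defined by Ψ(𝓕) = − ⊗_R 𝓕 is an equivalence of categories. -/

import Mathlib

open CategoryTheory CategoryTheory.Limits MulOpposite

universe u

section Preamble

variable (k : Type*) [CommRing k] (R : Type u) [Ring R] [Algebra k R]
variable (A : Type*) [Category.{u} A] [Preadditive A] [CategoryTheory.Linear k A]

/-- A left `R`-module in the `k`-linear category `A`: an object together with a
ring homomorphism `ρ : R → End 𝓕` which is `k`-linear, i.e. a `k`-algebra homomorphism. -/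
structure LMod where
  X : A
  ρ : R →+* End X
  algebraMap_smul' : ∀ a : k, ρ (algebraMap k R a) = a • (𝟙 X)

variable {k R A}

/-- the `k`-module structure on right `R`-modules obtained by restriction of scalars -/
noncomputable instance (M : ModuleCat.{u} Rᵐᵒᵖ) : Module k M :=
  RestrictScalars.module k Rᵐᵒᵖ M

instance (M : ModuleCat.{u} Rᵐᵒᵖ) : IsScalarTower k Rᵐᵒᵖ M :=
  RestrictScalars.isScalarTower k Rᵐᵒᵖ M

/-- The `k`-linear structure on the category of right `R`-modules, `a • m = m · γ(a)`. -/
noncomputable instance : CategoryTheory.Linear k (ModuleCat.{u} Rᵐᵒᵖ) where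
  homModule _ _ := ModuleCat.Hom.instModule
  smul_comp := by
    intros
    ext
    dsimp only [ModuleCat.hom_comp, LinearMap.comp_apply, ModuleCat.hom_smul]
    rw [LinearMap.smul_apply, LinearMap.map_smul_of_tower]
    rfl

/-- `Hom_A(𝓕, N)` is a right `R`-module via `α · r := ρ(r) ≫ α`. -/
instance homRMod (F : LMod k R A) (N : A) : Module Rᵐᵒᵖ (F.X ⟶ N) where
  smul r α := F.ρ r.unop ≫ α
  one_smul α := by show F.ρ _ ≫ α = α; simp
  mul_smul r s α := by
    show F.ρ _ ≫ α = F.ρ _ ≫ F.ρ _ ≫ α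
    rw [unop_mul, map_mul, End.mul_def, Category.assoc]
  smul_zero r := by show _ ≫ (0 : F.X ⟶ N) = 0; simp
  smul_add r α β := by show _ ≫ (α + β) = _ ≫ α + _ ≫ β; simp
  add_smul r s α := by
    show F.ρ _ ≫ α = F.ρ _ ≫ α + F.ρ _ ≫ α
    rw [MulOpposite.unop_add, map_add]; exact Preadditive.add_comp _ _ _ _ _ _
  zero_smul α := by show F.ρ _ ≫ α = 0; rw [MulOpposite.unop_zero, map_zero]; exact Limits.zero_comp

lemma homRMod_smul_def (F : LMod k R A) {N : A} (r : Rᵐᵒᵖ) (α : F.X ⟶ N) :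
    r • α = F.ρ r.unop ≫ α := rfl

/-- The functor `Hom_A(𝓕, -) : A ⥤ Mod R`. -/
noncomputable def homFunctor (F : LMod k R A) : A ⥤ ModuleCat.{u} Rᵐᵒᵖ where
  obj N := ModuleCat.of Rᵐᵒᵖ (F.X ⟶ N)
  map {N N'} f := ModuleCat.ofHom
    { toFun := fun α => α ≫ f
      map_add' := fun α β => Preadditive.add_comp _ _ _ _ _ _
      map_smul' := fun r α => by
        show (F.ρ r.unop ≫ α) ≫ f = F.ρ r.unop ≫ (α ≫ f)
        rw [Category.assoc] }
  map_id N := by apply ModuleCat.hom_ext; apply LinearMap.ext; intro α; exact Category.comp_id α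
  map_comp f g := by
    apply ModuleCat.hom_ext; apply LinearMap.ext; intro α; exact (Category.assoc _ _ _).symm

/-- `R` as a right module over itself. -/
noncomputable abbrev RR : ModuleCat.{u} Rᵐᵒᵖ := ModuleCat.of Rᵐᵒᵖ Rᵐᵒᵖ

variable (R) in
/-- left multiplication `μ_x` by `x` on `R`, a right `R`-module map -/
def mulMap (x : R) : (RR : ModuleCat.{u} Rᵐᵒᵖ) ⟶ RR := ModuleCat.ofHom {
  toFun r := op (x * r.unop)
  map_add' r s := by
    apply unop_injective
    show x * (r + s).unop = _
    rw [show (r + s).unop = r.unop + s.unop from rfl, mul_add]; rfl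
  map_smul' s t := by
    apply unop_injective
    show x * (s • t).unop = ((s • op (x * t.unop)).unop)
    rw [show (s • t).unop = t.unop * s.unop from rfl,
      show (s • op (x * t.unop)).unop = (x * t.unop) * s.unop from rfl, mul_assoc] }

/-- Morphisms `𝓕 → 𝓖` of left `R`-modules in `A` induce natural transformations
`Hom_A(𝓖,-) ⟶ Hom_A(𝓕,-)`. -/
noncomputable def homPre {F G : LMod k R A} (φ : F.X ⟶ G.X)
    (h : ∀ r : R, F.ρ r ≫ φ = φ ≫ G.ρ r) : homFunctor G ⟶ homFunctor F where
  app N := ModuleCat.ofHom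
    { toFun := fun α => φ ≫ α
      map_add' := fun α β => Preadditive.comp_add _ _ _ _ _ _
      map_smul' := fun r α => by
        show φ ≫ G.ρ r.unop ≫ α = F.ρ r.unop ≫ φ ≫ α
        rw [← Category.assoc, ← h, Category.assoc] }
  naturality N N' f := by apply ModuleCat.hom_ext; apply LinearMap.ext; intro α; exact (Category.assoc _ _ _).symm

/-- `M ⊗ φ` : the natural transformation `- ⊗_R 𝓕 ⟶ - ⊗_R 𝓖` induced by `φ : 𝓕 ⟶ 𝓖`,
obtained as the conjugate (mate) of `homPre φ`. -/
noncomputable def tensorMap {F G : LMod k R A} {TF TG : ModuleCat.{u} Rᵐᵒᵖ ⥤ A}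
    (adjF : TF ⊣ homFunctor F) (adjG : TG ⊣ homFunctor G) (φ : F.X ⟶ G.X)
    (h : ∀ r : R, F.ρ r ≫ φ = φ ≫ G.ρ r) : TF ⟶ TG :=
  (conjugateEquiv adjG adjF).symm (homPre φ h)

/-- The canonical map `ξ_𝓕 : 𝓕 ⟶ R ⊗_R 𝓕`. -/
noncomputable def xi {F : LMod k R A} {TF : ModuleCat.{u} Rᵐᵒᵖ ⥤ A}
    (adjF : TF ⊣ homFunctor F) : F.X ⟶ TF.obj RR :=
  (adjF.unit.app RR) (1 : Rᵐᵒᵖ)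

end Preamble

section Main

variable {k : Type*} [CommRing k] {R : Type u} [Ring R] [Algebra k R]
variable {A : Type*} [Category.{u} A] [Preadditive A] [CategoryTheory.Linear k A]

/-- The category `A_R` of left `R`-modules in `A`: morphisms are morphisms in `A`
commuting with the `R`-actions. -/
noncomputable instance : Category (LMod k R A) where
  Hom F G := {φ : F.X ⟶ G.X // ∀ r : R, F.ρ r ≫ φ = φ ≫ G.ρ r}
  id F := ⟨𝟙 F.X, fun r => by rw [Category.comp_id, Category.id_comp]⟩
  comp f g := ⟨f.1 ≫ g.1, fun r => by
    rw [← Category.assoc, f.2, Category.assoc, g.2, Category.assoc]⟩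
  id_comp f := Subtype.ext (Category.id_comp f.1)
  comp_id f := Subtype.ext (Category.comp_id f.1)
  assoc f g h := Subtype.ext (Category.assoc f.1 g.1 h.1)

variable (k R A) in
/-- The defining property of the category `B_k(Mod R, A)`: a functor `Mod R ⥤ A`
belongs to it iff it is `k`-linear, right exact, and commutes with direct sums. -/
def WattsObj (T : ModuleCat.{u} Rᵐᵒᵖ ⥤ A) : Prop :=
  T.Additive ∧
  (∀ (a : k) (X Y : ModuleCat.{u} Rᵐᵒᵖ) (f : X ⟶ Y), T.map (a • f) = a • T.map f) ∧
  Nonempty (PreservesFiniteColimits T) ∧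
  ∀ ι : Type u, Nonempty (PreservesColimitsOfShape (Discrete ι) T)

end Main

section Aux

variable {k : Type*} [CommRing k] {R : Type u} [Ring R] [Algebra k R]
variable {A : Type*} [Category.{u} A] [Preadditive A] [CategoryTheory.Linear k A]

lemma RR_hom_ext {M : ModuleCat.{u} Rᵐᵒᵖ} {f g : (RR : ModuleCat.{u} Rᵐᵒᵖ) ⟶ M}
    (h : ∀ r : Rᵐᵒᵖ, f r = g r) : f = g := ModuleCat.hom_ext (LinearMap.ext h)

lemma homPre_eq_iff {F G : LMod k R A} (φ φ' : F.X ⟶ G.X)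
    (h : ∀ r : R, F.ρ r ≫ φ = φ ≫ G.ρ r) (h' : ∀ r : R, F.ρ r ≫ φ' = φ' ≫ G.ρ r)
    (heq : homPre φ h = homPre φ' h') : φ = φ' := by
  have h0 := congrArg (fun η : homFunctor G ⟶ homFunctor F => η.app G.X (𝟙 G.X)) heq
  have h2 : φ ≫ 𝟙 G.X = φ' ≫ 𝟙 G.X := h0
  rwa [Category.comp_id, Category.comp_id] at h2

lemma homPre_surj {F G : LMod k R A} (η : homFunctor G ⟶ homFunctor F) :
    ∃ (φ : F.X ⟶ G.X) (h : ∀ r : R, F.ρ r ≫ φ = φ ≫ G.ρ r), homPre φ h = η := by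
  set φ : F.X ⟶ G.X := η.app G.X (𝟙 G.X) with hφ
  have hnat : ∀ (N : A) (α : G.X ⟶ N), η.app N α = φ ≫ α := by
    intro N α
    have h0 := ConcreteCategory.congr_hom (η.naturality α) (𝟙 G.X)
    have h2 : η.app N (𝟙 G.X ≫ α) = (η.app G.X (𝟙 G.X)) ≫ α := h0
    rwa [Category.id_comp] at h2
  have hcomm : ∀ r : R, F.ρ r ≫ φ = φ ≫ G.ρ r := by
    intro r
    have h1 : η.app G.X (G.ρ r) = φ ≫ G.ρ r := hnat G.X (G.ρ r)
    have hs : (op r : Rᵐᵒᵖ) • (𝟙 G.X) = G.ρ r := by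
      rw [homRMod_smul_def]; simp
    have h3 : (η.app G.X).hom (((op r : Rᵐᵒᵖ) • 𝟙 G.X : G.X ⟶ G.X)) =
        ((op r : Rᵐᵒᵖ) • (η.app G.X).hom (𝟙 G.X) : F.X ⟶ G.X) :=
      (η.app G.X).hom.map_smul (op r) (𝟙 G.X)
    rw [hs] at h3
    have h4 : η.app G.X (G.ρ r) = (op r : Rᵐᵒᵖ) • φ := h3
    rw [homRMod_smul_def] at h4
    simp only [unop_op] at h4
    rw [← h1, h4]
  refine ⟨φ, hcomm, ?_⟩
  ext N α
  exact (hnat N α).symm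

/-- The canonical right-`R`-module map `R ⟶ M`, `r ↦ r • m`. -/
def smulMapAux (M : ModuleCat.{u} Rᵐᵒᵖ) (m : M) : Rᵐᵒᵖ →ₗ[Rᵐᵒᵖ] M where
  toFun r := r • m
  map_add' r s := add_smul r s m
  map_smul' s r := mul_smul s r m

def smulMap (M : ModuleCat.{u} Rᵐᵒᵖ) (m : M) : (RR : ModuleCat.{u} Rᵐᵒᵖ) ⟶ M :=
  ModuleCat.ofHom (smulMapAux M m)

lemma smulMap_apply (M : ModuleCat.{u} Rᵐᵒᵖ) (m : M) (r : Rᵐᵒᵖ) :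
    smulMap M m r = r • m := rfl

lemma smulMap_RR (m : Rᵐᵒᵖ) : smulMap RR m = mulMap R m.unop :=
  RR_hom_ext fun r => by
    show r • m = op (m.unop * r.unop)
    rfl

lemma smulMap_one_eq_id : smulMap RR (1 : Rᵐᵒᵖ) = 𝟙 (RR : ModuleCat.{u} Rᵐᵒᵖ) :=
  RR_hom_ext fun r => mul_one r

lemma mulMap_comp (x y : R) : mulMap R y ≫ mulMap R x = (mulMap R (x * y) : RR ⟶ RR) :=
  RR_hom_ext fun r => by
    show op (x * (y * r.unop)) = op (x * y * r.unop)
    rw [mul_assoc]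

lemma mulMap_one : mulMap R (1 : R) = 𝟙 (RR : ModuleCat.{u} Rᵐᵒᵖ) :=
  RR_hom_ext fun r => by
    show op (1 * r.unop) = r
    rw [one_mul, op_unop]

lemma mulMap_zero : mulMap R (0 : R) = (0 : (RR : ModuleCat.{u} Rᵐᵒᵖ) ⟶ RR) :=
  RR_hom_ext fun r => by
    show op (0 * r.unop) = 0
    rw [zero_mul]
    rfl

lemma mulMap_add (x y : R) : (mulMap R (x + y) : RR ⟶ RR) = mulMap R x + mulMap R y :=
  RR_hom_ext fun r => by
    show op ((x + y) * r.unop) = op (x * r.unop) + op (y * r.unop)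
    rw [add_mul]
    rfl

lemma mulMap_algebraMap (a : k) :
    (mulMap R (algebraMap k R a) : RR ⟶ RR) = a • 𝟙 (RR : ModuleCat.{u} Rᵐᵒᵖ) :=
  RR_hom_ext fun r => by
    show op (algebraMap k R a * r.unop) = (a • 𝟙 (RR : ModuleCat.{u} Rᵐᵒᵖ)).hom r
    rw [ModuleCat.hom_smul, LinearMap.smul_apply]
    refine Eq.trans ?_ (Algebra.smul_def a r).symm
    rw [MulOpposite.algebraMap_apply]
    apply unop_injective
    show algebraMap k R a * r.unop = r.unop * algebraMap k R a
    exact Algebra.commutes a r.unop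

lemma mulMap_comp_smulMap (M : ModuleCat.{u} Rᵐᵒᵖ) (x : R) (m : M) :
    mulMap R x ≫ smulMap M m = smulMap M ((op x : Rᵐᵒᵖ) • m) :=
  RR_hom_ext fun r => by
    show (op (x * r.unop) : Rᵐᵒᵖ) • m = r • ((op x : Rᵐᵒᵖ) • m)
    rw [← mul_smul]
    congr 1

lemma eval_one (N : ModuleCat.{u} Rᵐᵒᵖ) (f : (RR : ModuleCat.{u} Rᵐᵒᵖ) ⟶ N) (m : Rᵐᵒᵖ) :
    f m = m • f (1 : Rᵐᵒᵖ) := by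
  have h1 : (m * (1 : Rᵐᵒᵖ) : Rᵐᵒᵖ) = m := mul_one m
  conv_lhs => rw [← h1]
  exact f.hom.map_smul m (1 : Rᵐᵒᵖ)

section WattsConstruction

variable (T : ModuleCat.{u} Rᵐᵒᵖ ⥤ A) [T.Additive]
variable (hlin : ∀ (a : k) (X Y : ModuleCat.{u} Rᵐᵒᵖ) (f : X ⟶ Y), T.map (a • f) = a • T.map f)

/-- The left `R`-module in `A` associated to a Watts functor `T`, namely `T(R)` with
the action induced by left multiplication. -/
noncomputable def wattsLMod : LMod k R A where
  X := T.obj RR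
  ρ :=
    { toFun := fun x => T.map (mulMap R x)
      map_one' := by
        show T.map (mulMap R (1 : R)) = 𝟙 (T.obj RR)
        rw [mulMap_one, T.map_id]
      map_mul' := fun x y => by
        show T.map (mulMap R (x * y)) = (T.map (mulMap R y) ≫ T.map (mulMap R x) : End (T.obj RR))
        rw [← T.map_comp, mulMap_comp]
      map_zero' := by
        show T.map (mulMap R (0 : R)) = 0
        rw [mulMap_zero, T.map_zero]
      map_add' := fun x y => by
        show T.map (mulMap R (x + y)) = T.map (mulMap R x) + T.map (mulMap R y)
        rw [mulMap_add, T.map_add] }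
  algebraMap_smul' := fun a => by
    show T.map (mulMap R (algebraMap k R a)) = _
    rw [← T.map_id, ← hlin]
    congr 1
    apply RR_hom_ext; intro r
    show op (algebraMap k R a * r.unop) = algebraMap k Rᵐᵒᵖ a * r
    rw [MulOpposite.algebraMap_apply]
    apply unop_injective
    show algebraMap k R a * r.unop = r.unop * algebraMap k R a
    exact Algebra.commutes a r.unop

lemma wattsLMod_X : (wattsLMod (k := k) T hlin).X = T.obj RR := rfl

lemma wattsLMod_ρ (x : R) :
    (wattsLMod (k := k) T hlin).ρ x = T.map (mulMap R x) := rfl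

/-- The canonical natural transformation `𝟭 ⟶ T ⋙ Hom(T R, -)`. -/
noncomputable def uTrans : 𝟭 (ModuleCat.{u} Rᵐᵒᵖ) ⟶ T ⋙ homFunctor (wattsLMod (k := k) T hlin) where
  app M := ModuleCat.ofHom
    { toFun := fun m => T.map (smulMap M m)
      map_add' := fun m m' => by
        show T.map (smulMap M (m + m')) = T.map (smulMap M m) + T.map (smulMap M m')
        have h1 : smulMap M (m + m') = smulMap M m + smulMap M m' :=
          RR_hom_ext fun r => smul_add r m m'
        rw [h1, T.map_add]
      map_smul' := fun r m => by
        show T.map (smulMap M (r • m)) =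
          (wattsLMod (k := k) T hlin).ρ r.unop ≫ T.map (smulMap M m)
        have e : T.map (smulMap M (r • m)) = T.map (mulMap R r.unop) ≫ T.map (smulMap M m) := by
          rw [← T.map_comp, mulMap_comp_smulMap, op_unop]
        exact e
      }
  naturality M M' f := by
    apply ModuleCat.hom_ext; apply LinearMap.ext; intro m
    show T.map (smulMap M' (f m)) = T.map (smulMap M m) ≫ T.map f
    rw [← T.map_comp]
    congr 1
    exact RR_hom_ext fun r => (f.hom.map_smul r m).symm

lemma uTrans_app_apply (M : ModuleCat.{u} Rᵐᵒᵖ) (m : M) :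
    (uTrans (k := k) T hlin).app M m = T.map (smulMap M m) := rfl

variable {TF : ModuleCat.{u} Rᵐᵒᵖ ⥤ A} (adjF : TF ⊣ homFunctor (wattsLMod (k := k) T hlin))

/-- The comparison transformation `TF ⟶ T`. -/
noncomputable def thetaTrans : TF ⟶ T where
  app M := (adjF.homEquiv M (T.obj M)).symm ((uTrans T hlin).app M)
  naturality M M' f := by
    rw [← Adjunction.homEquiv_naturality_left_symm]
    have h1 : f ≫ (uTrans T hlin).app M' =
        (uTrans T hlin).app M ≫ (homFunctor (wattsLMod (k := k) T hlin)).map (T.map f) :=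
      (uTrans T hlin).naturality f
    rw [h1, Adjunction.homEquiv_naturality_right_symm]

lemma theta_app_RR_isIso : IsIso ((thetaTrans T hlin adjF).app RR) := by
  have h0 : adjF.homEquiv RR (T.obj RR) ((thetaTrans T hlin adjF).app RR) =
      (uTrans T hlin).app RR := Equiv.apply_symm_apply _ _
  have hinv : xi adjF ≫ (thetaTrans T hlin adjF).app RR = 𝟙 (T.obj RR) := by
    rw [Adjunction.homEquiv_unit] at h0
    have h1 := ConcreteCategory.congr_hom h0 (1 : Rᵐᵒᵖ)
    have h2 : xi adjF ≫ (thetaTrans T hlin adjF).app RR = T.map (smulMap RR (1 : Rᵐᵒᵖ)) := h1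
    rwa [smulMap_one_eq_id, T.map_id] at h2
  have hinv2 : (thetaTrans T hlin adjF).app RR ≫ xi adjF = 𝟙 (TF.obj RR) := by
    apply (adjF.homEquiv RR (TF.obj RR)).injective
    refine (adjF.homEquiv_naturality_right ((thetaTrans T hlin adjF).app RR) (xi adjF)).trans ?_
    rw [Adjunction.homEquiv_id, h0]
    apply RR_hom_ext; intro m
    show T.map (smulMap RR m) ≫ xi adjF = adjF.unit.app RR m
    have hu : (adjF.unit.app RR) m = m • ((adjF.unit.app RR) (1 : Rᵐᵒᵖ)) :=
      eval_one _ (adjF.unit.app RR) m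
    rw [hu]
    rfl
  exact ⟨xi adjF, hinv2, hinv⟩

end WattsConstruction

/-- If a natural transformation is an isomorphism on the objects of a diagram, and both
functors preserve a colimit cocone, then it is an isomorphism on the cocone point. -/
lemma isIso_app_coconePt {C : Type*} [Category C] {D : Type*} [Category D]
    {F1 F2 : C ⥤ D} (τ : F1 ⟶ F2) {J : Type*} [Category J] {K : J ⥤ C} {c : Cocone K}
    (h1 : IsColimit (F1.mapCocone c)) (h2 : IsColimit (F2.mapCocone c))
    (hτ : ∀ j, IsIso (τ.app (K.obj j))) : IsIso (τ.app c.pt) := by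
  have heq : τ.app c.pt = (IsColimit.coconePointsIsoOfNatIso h1 h2
      (NatIso.ofComponents (fun j => asIso (τ.app (K.obj j)))
        (fun f => τ.naturality _))).hom := by
    apply h1.hom_ext; intro j
    rw [IsColimit.comp_coconePointsIsoOfNatIso_hom]
    exact τ.naturality (c.ι.app j)
  rw [heq]
  infer_instance

end Aux
section Aux2

variable {k : Type*} [CommRing k] {R : Type u} [Ring R] [Algebra k R]
variable {A : Type*} [Category.{u} A] [Preadditive A] [CategoryTheory.Linear k A]

/-- The canonical epimorphism from a free module onto `M`. -/
noncomputable def coverHom (M : ModuleCat.{u} Rᵐᵒᵖ) :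
    (∐ (fun _ : M => (RR : ModuleCat.{u} Rᵐᵒᵖ))) ⟶ M :=
  Sigma.desc (fun m => smulMap M m)

lemma coverHom_epi (M : ModuleCat.{u} Rᵐᵒᵖ) : Epi (coverHom M) := by
  rw [ModuleCat.epi_iff_surjective]
  intro m
  refine ⟨(Sigma.ι (fun _ : M => (RR : ModuleCat.{u} Rᵐᵒᵖ)) m) (1 : Rᵐᵒᵖ), ?_⟩
  have h2 : coverHom M ((Sigma.ι (fun _ : M => (RR : ModuleCat.{u} Rᵐᵒᵖ)) m) (1 : Rᵐᵒᵖ))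
      = smulMap M m (1 : Rᵐᵒᵖ) :=
    ConcreteCategory.congr_hom (Sigma.ι_desc (fun m => smulMap M m) m) (1 : Rᵐᵒᵖ)
  rw [h2]
  exact one_smul Rᵐᵒᵖ m

/-- The relations map for the canonical presentation of `M`. -/
noncomputable def relHom (M : ModuleCat.{u} Rᵐᵒᵖ) :
    (∐ (fun _ : LinearMap.ker (coverHom M).hom => (RR : ModuleCat.{u} Rᵐᵒᵖ))) ⟶
      (∐ (fun _ : M => (RR : ModuleCat.{u} Rᵐᵒᵖ))) :=
  Sigma.desc (fun x => smulMap _ x.1)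

lemma rel_w (M : ModuleCat.{u} Rᵐᵒᵖ) : relHom M ≫ coverHom M = 0 := by
  apply Sigma.hom_ext
  intro x
  have h1 : Sigma.ι (fun _ : LinearMap.ker (coverHom M).hom => (RR : ModuleCat.{u} Rᵐᵒᵖ)) x ≫
      relHom M = smulMap (∐ (fun _ : M => (RR : ModuleCat.{u} Rᵐᵒᵖ))) x.1 := Sigma.ι_desc _ _
  rw [comp_zero, ← Category.assoc, h1]
  refine RR_hom_ext fun r => ?_
  show (coverHom M).hom ((r : Rᵐᵒᵖ) • x.1) = 0
  rw [map_smul, LinearMap.mem_ker.mp x.2]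
  exact smul_zero r

/-- The canonical presentation of `M` as a cokernel of a map of free modules. -/
noncomputable def coverIsCokernel (M : ModuleCat.{u} Rᵐᵒᵖ) :
    IsColimit (CokernelCofork.ofπ (coverHom M) (rel_w M)) := by
  haveI : Epi (coverHom M) := coverHom_epi M
  have hex : (ShortComplex.mk (relHom M) (coverHom M) (rel_w M)).Exact := by
    rw [ShortComplex.moduleCat_exact_iff]
    intro x hx
    refine ⟨(Sigma.ι (fun _ : LinearMap.ker (coverHom M).hom => (RR : ModuleCat.{u} Rᵐᵒᵖ))
      ⟨x, LinearMap.mem_ker.mpr hx⟩) (1 : Rᵐᵒᵖ), ?_⟩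
    have h3 : Sigma.ι (fun _ : LinearMap.ker (coverHom M).hom => (RR : ModuleCat.{u} Rᵐᵒᵖ))
        ⟨x, LinearMap.mem_ker.mpr hx⟩ ≫ relHom M
        = smulMap (∐ (fun _ : M => (RR : ModuleCat.{u} Rᵐᵒᵖ))) x := Sigma.ι_desc _ _
    have h2 : relHom M ((Sigma.ι
          (fun _ : LinearMap.ker (coverHom M).hom => (RR : ModuleCat.{u} Rᵐᵒᵖ))
          ⟨x, LinearMap.mem_ker.mpr hx⟩) (1 : Rᵐᵒᵖ))
        = smulMap (∐ (fun _ : M => (RR : ModuleCat.{u} Rᵐᵒᵖ))) x (1 : Rᵐᵒᵖ) :=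
      ConcreteCategory.congr_hom h3 (1 : Rᵐᵒᵖ)
    rw [h2]
    exact one_smul Rᵐᵒᵖ x
  exact hex.gIsCokernel

lemma theta_isIso (T : ModuleCat.{u} Rᵐᵒᵖ ⥤ A) [T.Additive]
    (hlin : ∀ (a : k) (X Y : ModuleCat.{u} Rᵐᵒᵖ) (f : X ⟶ Y), T.map (a • f) = a • T.map f)
    {TF : ModuleCat.{u} Rᵐᵒᵖ ⥤ A} (adjF : TF ⊣ homFunctor (wattsLMod (k := k) T hlin))
    [PreservesFiniteColimits T]
    (hcoprod : ∀ ι : Type u, Nonempty (PreservesColimitsOfShape (Discrete ι) T)) :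
    IsIso (thetaTrans T hlin adjF) := by
  have hR : IsIso ((thetaTrans T hlin adjF).app RR) := theta_app_RR_isIso T hlin adjF
  haveI h1 : PreservesColimitsOfSize.{u, u} TF := adjF.leftAdjoint_preservesColimits
  haveI h2 : PreservesColimitsOfSize.{0, 0} TF := adjF.leftAdjoint_preservesColimits
  have hfree : ∀ ι : Type u,
      IsIso ((thetaTrans T hlin adjF).app (∐ (fun _ : ι => (RR : ModuleCat.{u} Rᵐᵒᵖ)))) := by
    intro ι
    haveI := (hcoprod ι).some
    exact isIso_app_coconePt (thetaTrans T hlin adjF)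
      (isColimitOfPreserves TF (colimit.isColimit (Discrete.functor (fun _ : ι => RR))))
      (isColimitOfPreserves T (colimit.isColimit (Discrete.functor (fun _ : ι => RR))))
      (fun j => hR)
  haveI : ∀ M : ModuleCat.{u} Rᵐᵒᵖ, IsIso ((thetaTrans T hlin adjF).app M) := by
    intro M
    exact isIso_app_coconePt (thetaTrans T hlin adjF)
      (isColimitOfPreserves TF (coverIsCokernel M))
      (isColimitOfPreserves T (coverIsCokernel M))
      (fun j => by cases j <;> exact hfree _)
  exact NatIso.isIso_of_isIso_app _

end Aux2

/-- **The generalized Watts theorem.** Let `A` be a cocomplete `k`-linear abelian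
category.  The functor `Ψ : A_R ⥤ B_k(Mod R, A)`, `Ψ(𝓕) = - ⊗_R 𝓕` (any functor
whose value at `𝓕` is left adjoint to `Hom_A(𝓕, -)` and whose action on morphisms
is the induced one) is an equivalence of categories. -/
theorem generalized_watts_equivalence
    (k : Type*) [CommRing k] (R : Type u) [Ring R] [Algebra k R]
    (A : Type*) [Category.{u} A] [Abelian A] [HasColimits A]
    [CategoryTheory.Linear k A]
    (Ψ : LMod k R A ⥤ ObjectProperty.FullSubcategory (WattsObj k R A))
    (adj : ∀ F : LMod k R A, (Ψ.obj F).obj ⊣ homFunctor F)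
    (hΨ : ∀ (F G : LMod k R A) (φ : F ⟶ G),
      (Ψ.map φ).hom = tensorMap (adj F) (adj G) φ.1 φ.2) :
    Ψ.IsEquivalence := by
  constructor
  · -- faithful
    refine ⟨fun {F G} {φ φ'} h => ?_⟩
    replace h : (Ψ.map φ).hom = (Ψ.map φ').hom := by rw [h]
    rw [hΨ F G φ, hΨ F G φ'] at h
    have h2 : homPre φ.1 φ.2 = homPre φ'.1 φ'.2 :=
      (conjugateEquiv (adj G) (adj F)).symm.injective h
    exact Subtype.ext (homPre_eq_iff φ.1 φ'.1 φ.2 φ'.2 h2)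
  · -- full
    refine ⟨fun {F G} σ => ?_⟩
    obtain ⟨φ, hc, he⟩ := homPre_surj (conjugateEquiv (adj G) (adj F) σ.hom)
    refine ⟨⟨φ, hc⟩, ?_⟩
    apply InducedCategory.hom_ext
    rw [hΨ]
    show (conjugateEquiv (adj G) (adj F)).symm (homPre φ hc) = σ.hom
    rw [he]
    exact Equiv.symm_apply_apply _ _
  · -- essentially surjective
    constructor
    intro Y
    obtain ⟨hAdd, hLin, ⟨hFin⟩, hCo⟩ := Y.property
    haveI := hAdd
    haveI := hFin
    have hiso : IsIso (thetaTrans Y.obj hLin (adj (wattsLMod (k := k) Y.obj hLin))) :=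
      theta_isIso Y.obj hLin (adj (wattsLMod (k := k) Y.obj hLin)) hCo
    obtain ⟨invθ, hinv1, hinv2⟩ := hiso.out
    exact ⟨wattsLMod (k := k) Y.obj hLin,
      ⟨⟨InducedCategory.homMk (thetaTrans Y.obj hLin (adj (wattsLMod (k := k) Y.obj hLin))),
        InducedCategory.homMk invθ, InducedCategory.hom_ext hinv1, InducedCategory.hom_ext hinv2⟩⟩⟩
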